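/- Let θ₁,…,θ_N ∈ Θ be distinct, α ∈ (0, min_{i≠j} ‖θ_i − θ_j‖₂) (so the closed balls B(θ_i,α) are pairwise disjoint), real numbers β₁,…,β_N, and suppose 0 < z_i := μ_ρ(B(θ_i,α)) ≤ U_ρ for each i. Define b_α(θ) := Σ_{i=1}^N (β_i/z_i) ρ(θ) 1{‖θ − θ_i‖₂ ≤ α}. If b : Θ → ℝ satisfies ‖b − b_α‖_{2,ρ} ≤ ξ for some ξ > 0, then Σ_{i=1}^N |β_i| ≤ √(N U_ρ) · ( ‖b‖_{2,ρ} + ξ ). -/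

import Mathlib

open MeasureTheory ProbabilityTheory

/-- The sampling measure `μ_ρ` on `Θ = ℝ^{d+1}`, with density `ρ` w.r.t. Lebesgue. -/
noncomputable def muRho (d : ℕ) (ρ : EuclideanSpace ℝ (Fin (d + 1)) → ℝ) :
    Measure (EuclideanSpace ℝ (Fin (d + 1))) :=
  volume.withDensity fun θ => ENNReal.ofReal (ρ θ)

/-- The norm `‖b‖_{2,ρ} = ( ∫_Θ b(θ)²/ρ(θ) dθ )^{1/2}`. -/
noncomputable def l2Rho (d : ℕ) (ρ b : EuclideanSpace ℝ (Fin (d + 1)) → ℝ) : ℝ :=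
  Real.sqrt (∫ θ, (b θ) ^ 2 / ρ θ)

/-- If `b_α(θ) = Σᵢ (βᵢ/zᵢ) ρ(θ) 1{‖θ−θᵢ‖ ≤ α}` is built on pairwise
disjoint balls with `0 < zᵢ ≤ U_ρ`, and `‖b − b_α‖_{2,ρ} ≤ ξ`, then
`Σᵢ |βᵢ| ≤ √(N U_ρ) (‖b‖_{2,ρ} + ξ)`. -/

lemma my_cs {X : Type*} [MeasurableSpace X] (μ : Measure X) (g h : X → ℝ)
    (hgm : AEStronglyMeasurable g μ) (hhm : AEStronglyMeasurable h μ)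
    (hg2 : Integrable (fun t => g t ^ 2) μ) (hh2 : Integrable (fun t => h t ^ 2) μ) :
    ∫ t, |g t * h t| ∂μ ≤ Real.sqrt (∫ t, g t ^ 2 ∂μ) * Real.sqrt (∫ t, h t ^ 2 ∂μ) := by
  have hpq : (2:ℝ).HolderConjugate 2 := Real.HolderConjugate.two_two
  have h2 : ENNReal.ofReal (2:ℝ) = 2 := by norm_num
  have hgabs : AEStronglyMeasurable (fun t => |g t|) μ := by
    simpa [Real.norm_eq_abs] using hgm.norm
  have hhabs : AEStronglyMeasurable (fun t => |h t|) μ := by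
    simpa [Real.norm_eq_abs] using hhm.norm
  have hgL : MemLp (fun t => |g t|) (ENNReal.ofReal (2:ℝ)) μ := by
    rw [h2]
    exact (memLp_two_iff_integrable_sq hgabs).2 (by simpa [sq_abs] using hg2)
  have hhL : MemLp (fun t => |h t|) (ENNReal.ofReal (2:ℝ)) μ := by
    rw [h2]
    exact (memLp_two_iff_integrable_sq hhabs).2 (by simpa [sq_abs] using hh2)
  have key := integral_mul_le_Lp_mul_Lq_of_nonneg hpq
    (Filter.Eventually.of_forall fun t => abs_nonneg (g t))
    (Filter.Eventually.of_forall fun t => abs_nonneg (h t)) hgL hhL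
  have e1 : ∀ t, |g t| * |h t| = |g t * h t| := fun t => (abs_mul _ _).symm
  have e2 : ∀ t, |g t| ^ (2:ℝ) = g t ^ 2 := by
    intro t
    rw [show (2:ℝ) = ((2:ℕ):ℝ) by norm_num, Real.rpow_natCast, sq_abs]
  have e3 : ∀ t, |h t| ^ (2:ℝ) = h t ^ 2 := by
    intro t
    rw [show (2:ℝ) = ((2:ℕ):ℝ) by norm_num, Real.rpow_natCast, sq_abs]
  simp_rw [e1, e2, e3] at key
  calc ∫ t, |g t * h t| ∂μ ≤ (∫ t, g t ^ 2 ∂μ) ^ ((1:ℝ)/2) * (∫ t, h t ^ 2 ∂μ) ^ ((1:ℝ)/2) := key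
    _ = _ := by
        rw [← Real.sqrt_eq_rpow, ← Real.sqrt_eq_rpow]

lemma my_tri {X : Type*} [MeasurableSpace X] (μ : Measure X) (g h : X → ℝ)
    (hgm : AEStronglyMeasurable g μ) (hhm : AEStronglyMeasurable h μ)
    (hg2 : Integrable (fun t => g t ^ 2) μ) (hh2 : Integrable (fun t => h t ^ 2) μ) :
    Real.sqrt (∫ t, (g t - h t) ^ 2 ∂μ) ≤
      Real.sqrt (∫ t, g t ^ 2 ∂μ) + Real.sqrt (∫ t, h t ^ 2 ∂μ) := by
  set A := ∫ t, g t ^ 2 ∂μ with hA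
  set B := ∫ t, h t ^ 2 ∂μ with hB
  have hA0 : 0 ≤ A := integral_nonneg fun t => sq_nonneg _
  have hB0 : 0 ≤ B := integral_nonneg fun t => sq_nonneg _
  have hgh : Integrable (fun t => g t * h t) μ := by
    refine Integrable.mono' ((hg2.add hh2).div_const 2) (hgm.mul hhm)
      (Filter.Eventually.of_forall fun t => ?_)
    show ‖g t * h t‖ ≤ (g t ^ 2 + h t ^ 2) / 2
    rw [Real.norm_eq_abs, abs_mul]
    nlinarith [sq_nonneg (|g t| - |h t|), sq_abs (g t), sq_abs (h t)]
  have hghbd : |∫ t, g t * h t ∂μ| ≤ Real.sqrt A * Real.sqrt B := by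
    calc |∫ t, g t * h t ∂μ| ≤ ∫ t, |g t * h t| ∂μ := by
          have := norm_integral_le_integral_norm (μ := μ) (fun t => g t * h t)
          simp only [Real.norm_eq_abs] at this
          exact this
      _ ≤ _ := my_cs μ g h hgm hhm hg2 hh2
  have hexp : (∫ t, (g t - h t) ^ 2 ∂μ) = A - 2 * ∫ t, g t * h t ∂μ + B := by
    have e : (fun t => (g t - h t) ^ 2) =
        fun t => (g t ^ 2 - 2 * (g t * h t)) + h t ^ 2 := by
      funext t; ring
    have i1 : Integrable (fun t => g t ^ 2 - 2 * (g t * h t)) μ :=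
      hg2.sub (hgh.const_mul 2)
    have i3 : Integrable (fun t => 2 * (g t * h t)) μ := hgh.const_mul 2
    rw [e, integral_add i1 hh2, integral_sub hg2 i3, MeasureTheory.integral_const_mul]
  have hle : (∫ t, (g t - h t) ^ 2 ∂μ) ≤ (Real.sqrt A + Real.sqrt B) ^ 2 := by
    rw [hexp]
    have h1 : -(Real.sqrt A * Real.sqrt B) ≤ ∫ t, g t * h t ∂μ := neg_le_of_abs_le hghbd
    have h2 : Real.sqrt A ^ 2 = A := Real.sq_sqrt hA0
    have h3 : Real.sqrt B ^ 2 = B := Real.sq_sqrt hB0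
    nlinarith
  calc Real.sqrt (∫ t, (g t - h t) ^ 2 ∂μ) ≤
      Real.sqrt ((Real.sqrt A + Real.sqrt B) ^ 2) := Real.sqrt_le_sqrt hle
    _ = Real.sqrt A + Real.sqrt B :=
        Real.sqrt_sq (by positivity)

theorem stmt_14
    {d : ℕ}
    (ρ : EuclideanSpace ℝ (Fin (d + 1)) → ℝ) (hρ_meas : Measurable ρ)
    (hρ_pos : ∀ θ, 0 < ρ θ) (hρ_prob : IsProbabilityMeasure (muRho d ρ))
    (Uρ : ℝ)
    (N : ℕ) (θ : Fin N → EuclideanSpace ℝ (Fin (d + 1))) (hθ : Function.Injective θ)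
    (α : ℝ) (hα0 : 0 < α) (hα : ∀ i j, i ≠ j → α < dist (θ i) (θ j))
    (hdisj : Pairwise fun i j =>
      Disjoint (Metric.closedBall (θ i) α) (Metric.closedBall (θ j) α))
    (β : Fin N → ℝ)
    (z : Fin N → ℝ)
    (hz : ∀ i, z i = (muRho d ρ (Metric.closedBall (θ i) α)).toReal)
    (hz_pos : ∀ i, 0 < z i) (hz_le : ∀ i, z i ≤ Uρ)
    (bα : EuclideanSpace ℝ (Fin (d + 1)) → ℝ)
    (hbα : ∀ t, bα t = ∑ i : Fin N, (β i / z i) * ρ t * (if dist t (θ i) ≤ α then 1 else 0))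
    (b : EuclideanSpace ℝ (Fin (d + 1)) → ℝ) (hb_meas : Measurable b)
    (hb_l2 : Integrable (fun t => (b t) ^ 2 / ρ t))
    (hdiff_l2 : Integrable (fun t => (b t - bα t) ^ 2 / ρ t))
    (ξ : ℝ) (hξ : 0 < ξ)
    (hclose : l2Rho d ρ (fun t => b t - bα t) ≤ ξ) :
    ∑ i : Fin N, |β i| ≤ Real.sqrt ((N : ℝ) * Uρ) * (l2Rho d ρ b + ξ) := by
  classical
  -- trivial case N = 0
  rcases Nat.eq_zero_or_pos N with hN0 | hNpos
  · subst hN0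
    simp
  have hUρ : 0 < Uρ := lt_of_lt_of_le (hz_pos ⟨0, hNpos⟩) (hz_le ⟨0, hNpos⟩)
  set B : Fin N → Set (EuclideanSpace ℝ (Fin (d + 1))) :=
    fun i => Metric.closedBall (θ i) α with hBdef
  have hBmeas : ∀ i, MeasurableSet (B i) := fun i => measurableSet_closedBall
  -- ρ is integrable on each ball
  have hInt : ∀ i, IntegrableOn ρ (B i) volume := by
    intro i
    refine ⟨hρ_meas.aestronglyMeasurable.restrict, ?_⟩
    have h1 : ∫⁻ t in B i, ‖ρ t‖ₑ ∂volume = ∫⁻ t in B i, ENNReal.ofReal (ρ t) ∂volume :=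
      lintegral_congr fun t => Real.enorm_eq_ofReal (hρ_pos t).le
    have h2 : ∫⁻ t in B i, ENNReal.ofReal (ρ t) ∂volume = muRho d ρ (B i) :=
      (withDensity_apply _ (hBmeas i)).symm
    rw [HasFiniteIntegral, h1, h2]
    exact measure_lt_top _ _
  have hzi : ∀ i, ∫ t in B i, ρ t ∂volume = z i := by
    intro i
    rw [hz i, muRho, withDensity_apply _ (hBmeas i),
      integral_eq_lintegral_of_nonneg_ae (Filter.Eventually.of_forall fun t => (hρ_pos t).le)
        hρ_meas.aestronglyMeasurable.restrict]
  have hIndInt : ∀ i, Integrable (fun t => Set.indicator (B i) ρ t) volume := by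
    intro i
    exact (integrable_indicator_iff (hBmeas i)).2 (hInt i)
  -- pointwise identity for b_α² / ρ
  have hpt : ∀ t, bα t ^ 2 / ρ t =
      ∑ i, (β i / z i) ^ 2 * Set.indicator (B i) ρ t := by
    intro t
    by_cases hex : ∃ i, dist t (θ i) ≤ α
    · obtain ⟨i0, hi0⟩ := hex
      have hmem0 : t ∈ B i0 := Metric.mem_closedBall.2 hi0
      have hnot : ∀ j, j ≠ i0 → ¬ dist t (θ j) ≤ α := by
        intro j hj hle
        exact Set.disjoint_left.1 (hdisj hj) (Metric.mem_closedBall.2 hle) hmem0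
      have hb1 : bα t = (β i0 / z i0) * ρ t := by
        rw [hbα, Finset.sum_eq_single i0]
        · simp [hi0]
        · intro j _ hj
          simp [hnot j hj]
        · simp
      rw [hb1, Finset.sum_eq_single i0]
      · rw [Set.indicator_of_mem hmem0, mul_pow, pow_two (ρ t), mul_div_assoc,
          mul_self_div_self]
      · intro j _ hj
        rw [Set.indicator_of_notMem (fun hm => hnot j hj (Metric.mem_closedBall.1 hm)),
          mul_zero]
      · simp
    · push_neg at hex
      have hb0 : bα t = 0 := by
        rw [hbα]
        exact Finset.sum_eq_zero fun j _ => by simp [not_le.2 (hex j)]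
      rw [hb0]
      rw [zero_pow (by norm_num), zero_div]
      symm
      exact Finset.sum_eq_zero fun j _ => by
        rw [Set.indicator_of_notMem (fun hm => (not_le.2 (hex j)) (Metric.mem_closedBall.1 hm)),
          mul_zero]
  -- the key integral identity
  have hI : (∫ t, bα t ^ 2 / ρ t) = ∑ i, β i ^ 2 / z i := by
    calc (∫ t, bα t ^ 2 / ρ t)
        = ∫ t, ∑ i, (β i / z i) ^ 2 * Set.indicator (B i) ρ t := by
          exact integral_congr_ae (Filter.Eventually.of_forall hpt)
      _ = ∑ i, ∫ t, (β i / z i) ^ 2 * Set.indicator (B i) ρ t :=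
          integral_finset_sum _ fun i _ => (hIndInt i).const_mul _
      _ = ∑ i, (β i / z i) ^ 2 * z i := by
          refine Finset.sum_congr rfl fun i _ => ?_
          rw [MeasureTheory.integral_const_mul, integral_indicator (hBmeas i), hzi i]
      _ = ∑ i, β i ^ 2 / z i := by
          refine Finset.sum_congr rfl fun i _ => ?_
          have : z i ≠ 0 := (hz_pos i).ne'
          field_simp
  -- measurability of bα
  have hbα_meas : Measurable bα := by
    have : bα = fun t => ∑ i, (β i / z i) * ρ t * (if dist t (θ i) ≤ α then 1 else 0) :=
      funext hbα
    rw [this]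
    refine Finset.measurable_sum _ fun i _ => ?_
    refine ((measurable_const.mul hρ_meas).mul ?_)
    exact Measurable.ite (measurableSet_closedBall (x := θ i) (ε := α))
      measurable_const measurable_const
  -- triangle inequality : √∫ bα²/ρ ≤ l2Rho b + l2Rho (b - bα)
  have hsqrt_meas : Measurable fun t => Real.sqrt (ρ t) :=
    Real.continuous_sqrt.measurable.comp hρ_meas
  set g : EuclideanSpace ℝ (Fin (d + 1)) → ℝ := fun t => b t / Real.sqrt (ρ t) with hgdef
  set h : EuclideanSpace ℝ (Fin (d + 1)) → ℝ :=
    fun t => (b t - bα t) / Real.sqrt (ρ t) with hhdef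
  have hg2eq : (fun t => g t ^ 2) = fun t => b t ^ 2 / ρ t := by
    funext t
    rw [hgdef]
    rw [div_pow, Real.sq_sqrt (hρ_pos t).le]
  have hh2eq : (fun t => h t ^ 2) = fun t => (b t - bα t) ^ 2 / ρ t := by
    funext t
    rw [hhdef]
    rw [div_pow, Real.sq_sqrt (hρ_pos t).le]
  have hgh2eq : (fun t => (g t - h t) ^ 2) = fun t => bα t ^ 2 / ρ t := by
    funext t
    rw [hgdef, hhdef]
    rw [div_sub_div_same, sub_sub_cancel, div_pow, Real.sq_sqrt (hρ_pos t).le]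
  have hg2 : Integrable (fun t => g t ^ 2) volume := by rw [hg2eq]; exact hb_l2
  have hh2 : Integrable (fun t => h t ^ 2) volume := by rw [hh2eq]; exact hdiff_l2
  have hgm : AEStronglyMeasurable g volume :=
    (hb_meas.div hsqrt_meas).aestronglyMeasurable
  have hhm : AEStronglyMeasurable h volume :=
    ((hb_meas.sub hbα_meas).div hsqrt_meas).aestronglyMeasurable
  have htri := my_tri volume g h hgm hhm hg2 hh2
  rw [hg2eq, hh2eq, hgh2eq] at htri
  have htri' : Real.sqrt (∫ t, bα t ^ 2 / ρ t) ≤ l2Rho d ρ b + ξ := by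
    refine le_trans htri ?_
    have : Real.sqrt (∫ t, (b t - bα t) ^ 2 / ρ t) ≤ ξ := hclose
    unfold l2Rho
    linarith
  -- finite Cauchy-Schwarz and conclusion
  have hS0 : (0:ℝ) ≤ ∑ i, |β i| := Finset.sum_nonneg fun i _ => abs_nonneg _
  have hI0 : (0:ℝ) ≤ ∑ i, β i ^ 2 / z i :=
    Finset.sum_nonneg fun i _ => div_nonneg (sq_nonneg _) (hz_pos i).le
  have key1 : (∑ i, |β i|) ^ 2 ≤ (N : ℝ) * ∑ i, β i ^ 2 := by
    have := sq_sum_le_card_mul_sum_sq (s := (Finset.univ : Finset (Fin N)))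
      (f := fun i => |β i|)
    simpa [sq_abs, Finset.card_univ] using this
  have key2 : (∑ i, β i ^ 2) ≤ Uρ * ∑ i, β i ^ 2 / z i := by
    rw [Finset.mul_sum]
    refine Finset.sum_le_sum fun i _ => ?_
    have h1 : β i ^ 2 = z i * (β i ^ 2 / z i) := by
      rw [mul_comm, div_mul_cancel₀ _ (hz_pos i).ne']
    nth_rewrite 1 [h1]
    exact mul_le_mul_of_nonneg_right (hz_le i)
      (div_nonneg (sq_nonneg _) (hz_pos i).le)
  have key3 : (∑ i, |β i|) ^ 2 ≤ (N : ℝ) * Uρ * ∑ i, β i ^ 2 / z i := by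
    calc (∑ i, |β i|) ^ 2 ≤ (N : ℝ) * ∑ i, β i ^ 2 := key1
      _ ≤ (N : ℝ) * (Uρ * ∑ i, β i ^ 2 / z i) :=
          mul_le_mul_of_nonneg_left key2 (Nat.cast_nonneg N)
      _ = (N : ℝ) * Uρ * ∑ i, β i ^ 2 / z i := by ring
  have hNU0 : (0:ℝ) ≤ (N : ℝ) * Uρ := mul_nonneg (Nat.cast_nonneg N) hUρ.le
  calc ∑ i, |β i| = Real.sqrt ((∑ i, |β i|) ^ 2) := (Real.sqrt_sq hS0).symm
    _ ≤ Real.sqrt ((N : ℝ) * Uρ * ∑ i, β i ^ 2 / z i) := Real.sqrt_le_sqrt key3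
    _ = Real.sqrt ((N : ℝ) * Uρ) * Real.sqrt (∑ i, β i ^ 2 / z i) := Real.sqrt_mul hNU0 _
    _ = Real.sqrt ((N : ℝ) * Uρ) * Real.sqrt (∫ t, bα t ^ 2 / ρ t) := by rw [hI]
    _ ≤ Real.sqrt ((N : ℝ) * Uρ) * (l2Rho d ρ b + ξ) :=
        mul_le_mul_of_nonneg_left htri' (Real.sqrt_nonneg _)
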